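/- Let χ_S, χ_N, D_S, α, ε > 0 and σ ∈ (0, 1/ε). Set λ⁻ = −σ + (χ_S+χ_N)(1−(εσ)²), λ⁺ = −σ + (−χ_S+χ_N)(1−(εσ)²), and s = √(4 D_S α + σ²). Assume λ⁻ > 0 and λ⁺ < 0. Then the ratio identity λ⁻/(−λ⁺) = (s + σ)/(s − σ) holds if and only if χ_N − σ/(1−(εσ)²) = χ_S σ/s. -/

import Mathlib

open Real

theorem stmt4 (χS χN DS α ε σ : ℝ) (hS : 0 < χS) (hN : 0 < χN) (hD : 0 < DS)
    (hα : 0 < α) (hε : 0 < ε) (hσ : σ ∈ Set.Ioo 0 (1 / ε))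
    (lm lp s : ℝ)
    (hlm : lm = -σ + (χS + χN) * (1 - (ε * σ) ^ 2))
    (hlp : lp = -σ + (-χS + χN) * (1 - (ε * σ) ^ 2))
    (hs : s = Real.sqrt (4 * DS * α + σ ^ 2))
    (hlmpos : 0 < lm) (hlpneg : lp < 0) :
    lm / (-lp) = (s + σ) / (s - σ) ↔ χN - σ / (1 - (ε * σ) ^ 2) = χS * σ / s := by
  obtain ⟨hσ0, hσε⟩ := hσ
  have hεσ : ε * σ < 1 := by
    rw [lt_div_iff₀ hε] at hσε; linarith [mul_comm σ ε]
  have hεσ0 : 0 < ε * σ := mul_pos hε hσ0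
  have hq : 0 < 1 - (ε * σ) ^ 2 := by nlinarith
  have hσs : σ < s := by
    rw [hs]
    have : σ = Real.sqrt (σ ^ 2) := by
      rw [Real.sqrt_sq hσ0.le]
    rw [this]
    apply Real.sqrt_lt_sqrt (by positivity)
    nlinarith
  have hs0 : 0 < s := lt_trans hσ0 hσs
  rw [div_eq_div_iff (by linarith) (by linarith)]
  constructor <;> intro h
  · field_simp [show (1 - σ ^ 2 * ε ^ 2) ≠ 0 by nlinarith]
    subst hlm hlp
    linear_combination h / 2
  · field_simp [show (1 - σ ^ 2 * ε ^ 2) ≠ 0 by nlinarith] at h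
    subst hlm hlp
    linear_combination 2 * h
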